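/- Fix b1, b2 ∈ (0,1), q = b1/b2, and t ∈ ℤ. Suppose a function E : ℤ → [0,1] satisfies for all y ∈ ℤ the recursion E(y) = (q^{−y+t}/(1+q^{−y+t}))·(E(y−1) + (1−E(y−1))(1−b1)) + (1/(1+q^{−y+t}))·E(y−1)·b2. Then E(y) = q^{−y+t}/(1 + q^{−y+t}) for every y ∈ ℤ. -/

import Mathlib

/-- If `E : ℤ → [0,1]` satisfies the current recursion
`E(y) = (q^{-y+t}/(1+q^{-y+t})) (E(y-1) + (1-E(y-1))(1-b1)) + (1/(1+q^{-y+t})) E(y-1) b2`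
for all `y`, where `q = b1/b2` and `b1, b2 ∈ (0,1)`, then
`E(y) = q^{-y+t}/(1+q^{-y+t})` for every `y`. -/
theorem stmt5 (b1 b2 q : ℝ)
    (hb1 : b1 ∈ Set.Ioo (0:ℝ) 1) (hb2 : b2 ∈ Set.Ioo (0:ℝ) 1)
    (hq : q = b1 / b2) (t : ℤ) (E : ℤ → ℝ)
    (hE : ∀ y : ℤ, E y ∈ Set.Icc (0:ℝ) 1)
    (hrec : ∀ y : ℤ,
      E y = (q ^ (-y + t) / (1 + q ^ (-y + t))) * (E (y-1) + (1 - E (y-1)) * (1 - b1))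
            + (1 / (1 + q ^ (-y + t))) * (E (y-1) * b2)) :
    ∀ y : ℤ, E y = q ^ (-y + t) / (1 + q ^ (-y + t)) := by
  obtain ⟨hb1p, hb1l⟩ := hb1
  obtain ⟨hb2p, hb2l⟩ := hb2
  have hqpos : 0 < q := by rw [hq]; positivity
  set f : ℤ → ℝ := fun y => q ^ (-y + t) / (1 + q ^ (-y + t)) with hf
  have hapos : ∀ y : ℤ, (0:ℝ) < q ^ (-y + t) := fun y => zpow_pos hqpos _
  have hd : ∀ y : ℤ, (0:ℝ) < 1 + q ^ (-y + t) := fun y => by linarith [hapos y]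
  have hb1eq : b1 = q * b2 := by rw [hq, div_mul_cancel₀ _ hb2p.ne']
  set m : ℝ := max b1 b2 with hm
  have hm0 : 0 ≤ m := le_trans hb1p.le (le_max_left _ _)
  have hm1 : m < 1 := max_lt hb1l hb2l
  have hfmem : ∀ y : ℤ, f y ∈ Set.Icc (0:ℝ) 1 := by
    intro y
    constructor
    · exact div_nonneg (hapos y).le (hd y).le
    · rw [div_le_one (hd y)]; linarith
  have key : ∀ y : ℤ, E y - f y
      = (b2 * (1 + q ^ (-y + t) * q) / (1 + q ^ (-y + t))) * (E (y-1) - f (y-1)) := by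
    intro y
    have ha1 : q ^ (-(y-1) + t) = q ^ (-y + t) * q := by
      rw [show -(y-1) + t = (-y + t) + 1 by ring, zpow_add_one₀ (ne_of_gt hqpos)]
    have hd1 : (0:ℝ) < 1 + q ^ (-y + t) * q := by
      have := hapos (y-1); rw [ha1] at this; linarith
    simp only [hf, ha1]
    rw [hrec y, hb1eq]
    field_simp
    ring
  have step : ∀ y : ℤ, |E y - f y| ≤ m * |E (y-1) - f (y-1)| := by
    intro y
    rw [key y, abs_mul]
    have hc0 : 0 ≤ b2 * (1 + q ^ (-y + t) * q) / (1 + q ^ (-y + t)) := by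
      have := hapos y
      positivity
    rw [abs_of_nonneg hc0]
    apply mul_le_mul_of_nonneg_right _ (abs_nonneg _)
    rw [div_le_iff₀ (hd y)]
    have h1 : b2 ≤ m := le_max_right _ _
    have h2 : b1 ≤ m := le_max_left _ _
    have ha := hapos y
    nlinarith [mul_le_mul_of_nonneg_left h2 ha.le]
  have bd1 : ∀ y : ℤ, |E y - f y| ≤ 1 := by
    intro y
    obtain ⟨hE0, hE1⟩ := hE y
    obtain ⟨hf0, hf1⟩ := hfmem y
    rw [abs_le]; constructor <;> linarith
  have hn : ∀ n : ℕ, ∀ y : ℤ, |E y - f y| ≤ m ^ n := by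
    intro n
    induction n with
    | zero => simpa using bd1
    | succ k ih =>
      intro y
      calc |E y - f y| ≤ m * |E (y-1) - f (y-1)| := step y
        _ ≤ m * m ^ k := mul_le_mul_of_nonneg_left (ih (y-1)) hm0
        _ = m ^ (k+1) := by ring
  intro y
  have hlim : Filter.Tendsto (fun n : ℕ => m ^ n) Filter.atTop (nhds 0) :=
    tendsto_pow_atTop_nhds_zero_of_lt_one hm0 hm1
  have : |E y - f y| ≤ 0 := ge_of_tendsto' hlim (fun n => hn n y)
  have := abs_nonpos_iff.mp this
  have := sub_eq_zero.mp this
  simpa [hf] using this
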